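/- Let n > 3 and let σ₁, …, σ_n be the T_1(n) list of sequences over A = {1, 2, …, n}. For every integer k with 1 < k ≤ n and every ρ ∈ [A]_k whose last element ρ[k] equals the last element of σ_{k−1}, ρ is a subsequence of the concatenation σ₁σ₂⋯σ_{k−1}. -/

import Mathlib

/-- `ρ ∈ [A]_k`: a sequence over `A` of length `k` with pairwise distinct elements. -/
def DistinctSeq (A : Finset ℕ) (k : ℕ) (ρ : List ℕ) : Prop :=
  ρ.length = k ∧ ρ.Nodup ∧ ∀ a ∈ ρ, a ∈ A

/-- `σ` is `k`-complete over `A`: every member of `[A]_k` is a subsequence of `σ`. -/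
def IsKComplete (A : Finset ℕ) (k : ℕ) (σ : List ℕ) : Prop :=
  ∀ ρ : List ℕ, DistinctSeq A k ρ → ρ.Sublist σ

/-- `σ` is a supersequence over `A`: it contains every permutation of `A` as a
subsequence, i.e. it is `|A|`-complete. -/
def IsSupersequence (A : Finset ℕ) (σ : List ℕ) : Prop :=
  IsKComplete A A.card σ

/-- A list of sequences `σ₁, …, σ_n` is forward complete if for every `1 ≤ k ≤ n`,
the concatenation `σ₁σ₂⋯σ_k` is `k`-complete. -/
def ForwardComplete (A : Finset ℕ) (L : List (List ℕ)) : Prop :=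
  ∀ k, 1 ≤ k → k ≤ L.length → IsKComplete A k ((L.take k).flatten)

/-- A list of sequences `σ₁, …, σ_n` is backward complete if for every `1 ≤ k ≤ n`,
the concatenation `σ_{n-k+1}⋯σ_n` is `k`-complete. -/
def BackwardComplete (A : Finset ℕ) (L : List (List ℕ)) : Prop :=
  ∀ k, 1 ≤ k → k ≤ L.length → IsKComplete A k ((L.drop (L.length - k)).flatten)

/-- Strongly complete: both forward and backward complete. -/
def StronglyComplete (A : Finset ℕ) (L : List (List ℕ)) : Prop :=
  ForwardComplete A L ∧ BackwardComplete A L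

/-- The `T₁(n)` sequences (1-indexed): `T1 n k` is the `k`-th sequence `σ_k`.
`σ₁ = ⟨1,…,n⟩`, `σ₂ = ⟨1,…,n-1⟩`, for `2 < k < n`,
`σ_k = σ_{k-2}[-1] · σ_{k-1}[1,-2]`, and `σ_n = σ_{n-2}[-1] · σ_{n-1}[1,-1]`. -/
def T1 (n : ℕ) : ℕ → List ℕ
  | 0 => []
  | 1 => List.range' 1 n
  | 2 => List.range' 1 (n-1)
  | (k+3) =>
      (T1 n (k+1)).getLastD 0 ::
        (if k + 3 = n then T1 n (k+2) else (T1 n (k+2)).dropLast)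

/-- The `T₁(n)` list of sequences `σ₁, σ₂, …, σ_n`. -/
def T1List (n : ℕ) : List (List ℕ) := (List.range n).map (fun i => T1 n (i+1))

/-- **Lemma 7, first part.** For the `T₁(n)` list over `A = {1,…,n}`,
`n > 3`: for every `1 < k ≤ n` and every `ρ ∈ [A]_k` whose last element equals the
last element of `σ_{k-1}`, `ρ` is a subsequence of `σ₁σ₂⋯σ_{k-1}`. -/
lemma T1_one (n : ℕ) : T1 n 1 = List.range' 1 n := rfl
lemma T1_two (n : ℕ) : T1 n 2 = List.range' 1 (n-1) := rfl
lemma T1_succ3 (n k : ℕ) : T1 n (k+3) =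
    (T1 n (k+1)).getLastD 0 ::
      (if k + 3 = n then T1 n (k+2) else (T1 n (k+2)).dropLast) := rfl

lemma range'_last (s e : ℕ) : List.range' s (e+1) = List.range' s e ++ [s+e] := by
  simpa using List.range'_concat (s := s) (n := e) (step := 1)

lemma getLastD_range' (s e : ℕ) : (List.range' s (e+1)).getLastD 0 = s+e := by
  rw [range'_last, List.getLastD_concat]

lemma dropLast_range' (s e : ℕ) : (List.range' s (e+1)).dropLast = List.range' s e := by
  rw [range'_last, List.dropLast_concat]

lemma mem_range'' {s a e : ℕ} (h1 : s ≤ a) (h2 : a < s + e) : a ∈ List.range' s e :=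
  List.mem_range'.mpr ⟨a - s, by omega, by omega⟩

lemma pair_sublist {b c e : ℕ} (h1 : 1 ≤ b) (h2 : b < c) (h3 : c ≤ e) :
    [b, c].Sublist (List.range' 1 e) := by
  have happ : List.range' 1 b ++ List.range' (1+b) (e-b) = List.range' 1 e := by
    have := List.range'_append (s := 1) (m := b) (n := e-b) (step := 1)
    simpa [show e - b + b = e by omega, show b + (e - b) = e by omega] using this
  rw [← happ]
  have : [b] ++ [c] = [b, c] := rfl
  rw [← this]
  exact List.Sublist.append
    (List.singleton_sublist.mpr (mem_range'' h1 (by omega)))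
    (List.singleton_sublist.mpr (mem_range'' (by omega) (by omega)))

theorem Tform : ∀ (i e : ℕ), T1 (i+e+3) (i+2) = List.range' (e+4) i ++ List.range' 1 (e+2)
  | 0, e => by simp [T1_two]
  | 1, e => by
    rw [show (1:ℕ)+2 = 0+3 by rfl, T1_succ3, if_neg (by omega)]
    rw [show (0:ℕ)+1 = 1 by rfl, T1_one, T1_two]
    rw [show 1+e+3 = (e+3)+1 by omega, getLastD_range',
      show e+3+1-1 = (e+2)+1 by omega, dropLast_range']
    rw [show List.range' (e+4) 1 = [e+4] from List.range'_one ..]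
    simp [show 1+(e+3) = e+4 by omega]
  | (i+2), e => by
    have ih1 : T1 (i+2+e+3) (i+2) = List.range' (e+6) i ++ List.range' 1 (e+4) := by
      have := Tform i (e+2)
      rw [show i+(e+2)+3 = i+2+e+3 by omega] at this
      rw [this, show e+2+4 = e+6 by omega, show e+2+2 = e+4 by omega]
    have ih2 : T1 (i+2+e+3) (i+3) = List.range' (e+5) (i+1) ++ List.range' 1 (e+3) := by
      have := Tform (i+1) (e+1)
      rw [show i+1+(e+1)+3 = i+2+e+3 by omega, show i+1+2 = i+3 by omega] at this
      rw [this, show e+1+4 = e+5 by omega, show e+1+2 = e+3 by omega]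
    rw [show i+2+2 = (i+1)+3 by omega, T1_succ3, if_neg (by omega),
      show i+1+1 = i+2 by omega, show i+1+2 = i+3 by omega, ih1, ih2]
    rw [show List.range' 1 (e+4) = List.range' 1 ((e+3)+1) by norm_num]
    rw [show (List.range' (e+6) i ++ List.range' 1 (e+3+1)).getLastD 0 = e+4 by
      rw [range'_last]
      rw [← List.append_assoc, List.getLastD_concat]; omega]
    rw [List.dropLast_append_of_ne_nil (l := List.range' 1 (e+3)) (by simp),
      show List.range' 1 (e+3) = List.range' 1 ((e+2)+1) by norm_num, dropLast_range']
    rw [show List.range' (e+4) (i+2) = (e+4) :: List.range' (e+5) (i+1) by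
      rw [List.range'_succ]]
    simp

def flatT (n j : ℕ) : List ℕ := ((T1List n).take j).flatten

lemma flatT_zero (n : ℕ) : flatT n 0 = [] := rfl

lemma flatT_succ (n j : ℕ) (h : j < n) : flatT n (j+1) = flatT n j ++ T1 n (j+1) := by
  unfold flatT T1List
  rw [← List.map_take, ← List.map_take, List.take_range, List.take_range,
    min_eq_left (by omega), min_eq_left (by omega), List.range_succ, List.map_append,
    List.flatten_append]
  simp

theorem mainPQ (n : ℕ) (hn : 3 < n) (k : ℕ) :
    (2 ≤ k → k ≤ n → ∀ m, m + k = n + 2 →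
      ∀ τ : List ℕ, τ.length + 1 = k → τ.Nodup → (∀ a ∈ τ, 1 ≤ a ∧ a ≤ n) → m ∉ τ →
        (τ ++ [m]).Sublist (flatT n (k-1))) ∧
    (1 ≤ k → k + 2 ≤ n → ∀ ρ : List ℕ, ρ.length = k → ρ.Nodup →
      (∀ a ∈ ρ, 1 ≤ a ∧ a ≤ n) → ρ.Sublist (flatT n k)) := by
  induction k using Nat.strong_induction_on with
  | _ k ih =>
  have hQ : 2 ≤ k → k ≤ n → ∀ m, m + k = n + 2 →
      ∀ τ : List ℕ, τ.length + 1 = k → τ.Nodup → (∀ a ∈ τ, 1 ≤ a ∧ a ≤ n) → m ∉ τ →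
        (τ ++ [m]).Sublist (flatT n (k-1)) := by
    intro hk2 hkn m hm τ hlen hnd hrange hmτ
    rcases eq_or_lt_of_le hk2 with h2 | h3
    · -- k = 2
      subst h2
      have hmn : m = n := by omega
      rw [hmn]
      obtain ⟨a, rfl⟩ := List.length_eq_one_iff.mp (by omega : τ.length = 1)
      have h1 : flatT n 1 = List.range' 1 n := by
        rw [show (1:ℕ) = 0 + 1 from rfl, flatT_succ n 0 (by omega), flatT_zero, T1_one]
        simp
      rw [show (2:ℕ)-1 = 1 from rfl, h1]
      have ha := hrange a (by simp)
      have han : a ≠ n := by intro h; exact hmτ (by simp [h, hmn])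
      exact pair_sublist ha.1 (by omega) le_rfl
    · -- k ≥ 3
      obtain ⟨i, rfl⟩ : ∃ i, k = i+3 := ⟨k-3, by omega⟩
      obtain ⟨e, rfl⟩ : ∃ e, n = i+e+3 := ⟨n-i-3, by omega⟩
      have hme : m = e+2 := by omega
      subst hme
      obtain rfl | ⟨τ', b, rfl⟩ := τ.eq_nil_or_concat
      · simp at hlen
      simp only [List.concat_eq_append] at hnd hrange hmτ hlen ⊢
      have hlen' : τ'.length = i+1 := by
        simp at hlen; omega
      have hnd' := List.nodup_append'.mp hnd
      have hbτ' : b ∉ τ' := by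
        intro h
        exact (hnd'.2.2 h) (by simp)
      have hb := hrange b (by simp)
      have hbm : b ≠ e+2 := by intro h; exact hmτ (by simp [h])
      have hflat : flatT (i+e+3) (i+3-1) =
          flatT (i+e+3) (i+1) ++ (List.range' (e+4) i ++ List.range' 1 (e+2)) := by
        rw [show i+3-1 = (i+1)+1 by omega, flatT_succ _ _ (by omega), Tform]
      rw [hflat]
      by_cases hbe : b = e+3
      · subst hbe
        have hτ' := (ih (i+2) (by omega)).1 (by omega) (by omega) (e+3) (by omega)
          τ' (by omega) hnd'.1 (fun a ha => hrange a (by simp [ha])) hbτ'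
        have hm2 : [e+2].Sublist (List.range' (e+4) i ++ List.range' 1 (e+2)) :=
          (List.singleton_sublist.mpr (mem_range'' (by omega) (by omega))).trans
            (List.sublist_append_right _ _)
        exact List.Sublist.append hτ' hm2
      · have hτ' := (ih (i+1) (by omega)).2 (by omega) (by omega)
          τ' hlen' hnd'.1 (fun a ha => hrange a (by simp [ha]))
        have hpair : [b, e+2].Sublist (List.range' (e+4) i ++ List.range' 1 (e+2)) := by
          by_cases hble : b ≤ e+1
          · exact (pair_sublist hb.1 (by omega) le_rfl).trans (List.sublist_append_right _ _)
          · have : [b] ++ [e+2] = [b, e+2] := rfl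
            rw [← this]
            exact List.Sublist.append
              (List.singleton_sublist.mpr (mem_range'' (by omega) (by omega)))
              (List.singleton_sublist.mpr (mem_range'' (by omega) (by omega)))
        have : τ' ++ [b] ++ [e+2] = τ' ++ [b, e+2] := by simp
        rw [this]
        exact List.Sublist.append hτ' hpair
  refine ⟨hQ, ?_⟩
  intro hk1 hkn ρ hlen hnd hrange
  rcases eq_or_lt_of_le hk1 with h1 | h2
  · -- k = 1
    subst h1
    obtain ⟨a, rfl⟩ := List.length_eq_one_iff.mp hlen
    have h1 : flatT n 1 = List.range' 1 n := by
      rw [show (1:ℕ) = 0 + 1 from rfl, flatT_succ n 0 (by omega), flatT_zero, T1_one]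
      simp
    rw [h1]
    have ha := hrange a (by simp)
    exact List.singleton_sublist.mpr (mem_range'' ha.1 (by omega))
  · -- k ≥ 2
    obtain ⟨j, rfl⟩ : ∃ j, k = j+2 := ⟨k-2, by omega⟩
    obtain ⟨e, rfl⟩ : ∃ e, n = j+e+4 := ⟨n-j-4, by omega⟩
    obtain rfl | ⟨ρ', a, rfl⟩ := ρ.eq_nil_or_concat
    · simp at hlen
    simp only [List.concat_eq_append] at hnd hrange hlen ⊢
    have hlen' : ρ'.length = j+1 := by simp at hlen; omega
    have hnd' := List.nodup_append'.mp hnd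
    have haρ' : a ∉ ρ' := fun h => (hnd'.2.2 h) (by simp)
    have ha := hrange a (by simp)
    have hT : T1 (j+e+4) (j+2) = List.range' (e+5) j ++ List.range' 1 (e+3) := by
      have := Tform j (e+1)
      rw [show j+(e+1)+3 = j+e+4 by omega] at this
      rw [this, show e+1+4 = e+5 by omega, show e+1+2 = e+3 by omega]
    have hflat : flatT (j+e+4) (j+2) = flatT (j+e+4) (j+1) ++ T1 (j+e+4) (j+2) := by
      rw [show j+2 = (j+1)+1 from rfl, flatT_succ _ _ (by omega)]
    by_cases hae : a = e+4
    · subst hae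
      have := hQ (by omega) (by omega) (e+4) (by omega) ρ' (by omega) hnd'.1
        (fun x hx => hrange x (by simp [hx])) haρ'
      rw [show j+2-1 = j+1 by omega] at this
      rw [hflat]
      exact this.trans (List.sublist_append_left _ _)
    · have hρ' := (ih (j+1) (by omega)).2 (by omega) (by omega)
        ρ' hlen' hnd'.1 (fun x hx => hrange x (by simp [hx]))
      have hamem : [a].Sublist (T1 (j+e+4) (j+2)) := by
        rw [hT]
        refine List.singleton_sublist.mpr ?_
        by_cases hle : a ≤ e+3
        · exact List.mem_append_right _ (mem_range'' (by omega) (by omega))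
        · exact List.mem_append_left _ (mem_range'' (by omega) (by omega))
      rw [hflat]
      exact List.Sublist.append hρ' hamem

lemma T1_getLastD (n j : ℕ) (h1 : 1 ≤ j) (h2 : j+1 ≤ n) :
    (T1 n j).getLastD 0 = n - j + 1 := by
  rcases eq_or_lt_of_le h1 with h | h
  · obtain ⟨n', rfl⟩ : ∃ n', n = n'+1 := ⟨n-1, by omega⟩
    rw [← h, T1_one, getLastD_range']
    omega
  · obtain ⟨i, rfl⟩ : ∃ i, j = i+2 := ⟨j-2, by omega⟩
    obtain ⟨e, rfl⟩ : ∃ e, n = i+e+3 := ⟨n-i-3, by omega⟩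
    rw [Tform, show List.range' 1 (e+2) = List.range' 1 ((e+1)+1) from rfl,
      range'_last, ← List.append_assoc, List.getLastD_concat]
    omega

theorem T1_last_letter_sublist (n : ℕ) (hn : 3 < n) (k : ℕ) (hk1 : 1 < k) (hk2 : k ≤ n)
    (ρ : List ℕ) (hρ : DistinctSeq (Finset.Icc 1 n) k ρ)
    (hlast : ρ.getLastD 0 = (T1 n (k-1)).getLastD 0) :
    ρ.Sublist (((T1List n).take (k-1)).flatten) := by
  obtain ⟨hlen, hnd, hrange⟩ := hρ
  obtain rfl | ⟨ρ', c, rfl⟩ := ρ.eq_nil_or_concat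
  · simp at hlen; omega
  simp only [List.concat_eq_append] at hlen hnd hrange hlast ⊢
  rw [List.getLastD_concat, T1_getLastD n (k-1) (by omega) (by omega)] at hlast
  subst hlast
  have hnd' := List.nodup_append'.mp hnd
  have hcρ' : (n - (k-1) + 1) ∉ ρ' := fun h => (hnd'.2.2 h) (by simp)
  have := (mainPQ n hn k).1 hk1 hk2 (n - (k-1) + 1) (by omega) ρ'
    (by simp at hlen; omega) hnd'.1
    (fun a ha => by
      have := hrange a (by simp [ha])
      simpa using Finset.mem_Icc.mp this) hcρ'
  exact this
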